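/- Suppose f is increasing and differentiable on [δ, U) and f' is nonincreasing on [δ, U). Then the δ-smoothing g is increasing and concave on [0, U) if and only if f''(δ) ≥ (3/δ)(f'(δ) - f(δ)/δ), i.e., if and only if g₂ ≤ 0. -/

import Mathlib

set_option maxHeartbeats 1000000

open Set Filter Topology

theorem stmt_3 (f : ℝ → ℝ) (U : EReal) (δ : ℝ) (hδ : 0 < δ) (hδU : (δ : EReal) < U)
    (hf0 : f 0 = 0)
    (hf1 : DifferentiableAt ℝ f δ) (hf2 : DifferentiableAt ℝ (deriv f) δ)
    (hmono : StrictMonoOn f {w : ℝ | δ ≤ w ∧ (w : EReal) < U})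
    (hdiff : ∀ w : ℝ, δ ≤ w → (w : EReal) < U → DifferentiableAt ℝ f w)
    (hanti : AntitoneOn (deriv f) {w : ℝ | δ ≤ w ∧ (w : EReal) < U})
    (g : ℝ → ℝ)
    (hg : g = fun w =>
      if w ≤ δ then
        (3 * f δ / δ - 2 * deriv f δ + δ * deriv (deriv f) δ / 2) * w +
        (-6 * f δ / δ ^ 2 + 6 * deriv f δ / δ - 2 * deriv (deriv f) δ) / 2 * w ^ 2 +
        (6 * f δ / δ ^ 3 - 6 * deriv f δ / δ ^ 2 + 3 * deriv (deriv f) δ / δ) / 6 * w ^ 3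
      else f w) :
    (StrictMonoOn g {w : ℝ | 0 ≤ w ∧ (w : EReal) < U} ∧
      ConcaveOn ℝ {w : ℝ | 0 ≤ w ∧ (w : EReal) < U} g) ↔
      deriv (deriv f) δ ≥ 3 / δ * (deriv f δ - f δ / δ) := by
  set d1 := deriv f δ with hd1
  set d2 := deriv (deriv f) δ with hd2def
  set a1 := 3 * f δ / δ - 2 * d1 + δ * d2 / 2 with ha1
  set a2 := -6 * f δ / δ ^ 2 + 6 * d1 / δ - 2 * d2 with ha2
  set a3 := 6 * f δ / δ ^ 3 - 6 * d1 / δ ^ 2 + 3 * d2 / δ with ha3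
  set S := {w : ℝ | 0 ≤ w ∧ (w : EReal) < U} with hS
  have hδne : δ ≠ 0 := hδ.ne'
  have hδS : δ ∈ S := ⟨hδ.le, hδU⟩
  -- algebraic identities
  have e1 : a1 * δ + a2 / 2 * δ ^ 2 + a3 / 6 * δ ^ 3 = f δ := by
    rw [ha1, ha2, ha3]; field_simp; ring
  have e2 : a1 + a2 * δ + a3 / 2 * δ ^ 2 = d1 := by
    rw [ha1, ha2, ha3]; field_simp; ring
  have e3 : a2 + a3 * δ = d2 := by
    rw [ha2, ha3]; field_simp; ring
  -- the equivalence of the RHS with a2 ≤ 0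
  have hδ2 : (0:ℝ) < δ ^ 2 := by positivity
  have h3 : a2 * δ ^ 2 = 6 * d1 * δ - 6 * f δ - 2 * d2 * δ ^ 2 := by
    rw [ha2]; field_simp; ring
  have h1 : 3 / δ * (d1 - f δ / δ) * δ ^ 2 = 3 * d1 * δ - 3 * f δ := by
    field_simp
  have hiff : (d2 ≥ 3 / δ * (d1 - f δ / δ)) ↔ a2 ≤ 0 := by
    constructor
    · intro h
      have := mul_le_mul_of_nonneg_right h hδ2.le
      rw [h1] at this
      nlinarith
    · intro h
      have := mul_le_mul_of_nonneg_right h hδ2.le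
      rw [h3, zero_mul] at this
      rw [ge_iff_le, ← sub_nonneg, ← mul_le_mul_iff_of_pos_right hδ2] at *
      nlinarith
  rw [hiff]
  -- existence of a real point between δ and U (and between any w < U and U)
  have hbtwn : ∀ w : ℝ, (w : EReal) < U → ∃ v : ℝ, w < v ∧ (v : EReal) < U := by
    intro w hw
    obtain ⟨v, hv1, hv2⟩ := EReal.lt_iff_exists_real_btwn.mp hw
    exact ⟨v, by exact_mod_cast hv1, hv2⟩
  -- f' > 0 on [δ, U)
  have hfpos : ∀ w : ℝ, δ ≤ w → (w : EReal) < U → 0 < deriv f w := by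
    intro w hw hwU
    obtain ⟨v, hv1, hv2⟩ := hbtwn w hwU
    have hmemv : ∀ x : ℝ, x ∈ Icc w v → x ∈ {w : ℝ | δ ≤ w ∧ (w : EReal) < U} := by
      intro x hx
      exact ⟨hw.trans hx.1, lt_of_le_of_lt (by exact_mod_cast hx.2) hv2⟩
    have hcont : ContinuousOn f (Icc w v) := fun x hx =>
      ((hdiff x (hmemv x hx).1 (hmemv x hx).2).continuousAt).continuousWithinAt
    have hder : ∀ x ∈ Ioo w v, HasDerivAt f (deriv f x) x := fun x hx =>
      (hdiff x (hmemv x ⟨hx.1.le, hx.2.le⟩).1 (hmemv x ⟨hx.1.le, hx.2.le⟩).2).hasDerivAt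
    obtain ⟨c, hc, hceq⟩ := exists_hasDerivAt_eq_slope f (deriv f) hv1 hcont hder
    have hfwv : f w < f v := hmono ⟨hw, hwU⟩ ⟨hw.trans hv1.le, hv2⟩ hv1
    have hcpos : 0 < deriv f c := by
      rw [hceq]; exact div_pos (by linarith) (by linarith)
    exact lt_of_lt_of_le hcpos (hanti ⟨hw, hwU⟩ (hmemv c ⟨hc.1.le, hc.2.le⟩) hc.1.le)
  have hd1pos : 0 < d1 := hfpos δ le_rfl hδU
  -- d2 ≤ 0
  have hd2le : d2 ≤ 0 := by
    have hs := hf2.hasDerivAt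
    rw [hasDerivAt_iff_tendsto_slope] at hs
    have h2 : Tendsto (slope (deriv f) δ) (𝓝[>] δ) (𝓝 d2) :=
      hs.mono_left (nhdsWithin_mono _ fun x hx => ne_of_gt hx)
    obtain ⟨v, hv1, hv2⟩ := hbtwn δ hδU
    have hev : ∀ᶠ x in 𝓝[>] δ, slope (deriv f) δ x ≤ 0 := by
      filter_upwards [Ioo_mem_nhdsGT_of_mem (Set.mem_Ico.mpr ⟨le_rfl, hv1⟩)] with x hx
      rw [slope_def_field]
      have hxU : (x : EReal) < U := lt_of_le_of_lt (by exact_mod_cast hx.2.le) hv2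
      have : deriv f x ≤ deriv f δ := hanti ⟨le_rfl, hδU⟩ ⟨hx.1.le, hxU⟩ hx.1.le
      exact div_nonpos_of_nonpos_of_nonneg (by linarith) (by linarith [hx.1])
    exact le_of_tendsto h2 hev
  -- the cubic and its derivative
  have hP : ∀ x : ℝ, HasDerivAt (fun w : ℝ => a1 * w + a2 / 2 * w ^ 2 + a3 / 6 * w ^ 3)
      (a1 + a2 * x + a3 / 2 * x ^ 2) x := by
    intro x
    have h1 : HasDerivAt (fun w : ℝ => a1 * w) a1 x := by
      simpa using (hasDerivAt_id x).const_mul a1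
    have h2 : HasDerivAt (fun w : ℝ => a2 / 2 * w ^ 2) (a2 * x) x := by
      have := (hasDerivAt_pow 2 x).const_mul (a2 / 2)
      refine this.congr_deriv ?_; push_cast; ring
    have h3 : HasDerivAt (fun w : ℝ => a3 / 6 * w ^ 3) (a3 / 2 * x ^ 2) x := by
      have := (hasDerivAt_pow 3 x).const_mul (a3 / 6)
      refine this.congr_deriv ?_; push_cast; ring
    exact (h1.add h2).add h3
  set G : ℝ → ℝ := fun w => if w ≤ δ then a1 + a2 * w + a3 / 2 * w ^ 2 else deriv f w with hG
  -- g has derivative G w at each w ∈ S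
  have hgderiv : ∀ w : ℝ, (w : EReal) < U → HasDerivAt g (G w) w := by
    intro w hwU
    rcases lt_trichotomy w δ with hwδ | hwδ | hwδ
    · have hev : g =ᶠ[nhds w] fun w : ℝ => a1 * w + a2 / 2 * w ^ 2 + a3 / 6 * w ^ 3 := by
        filter_upwards [Iio_mem_nhds hwδ] with x hx
        have hxδ : x ≤ δ := le_of_lt (mem_Iio.mp hx)
        simp [hg, hxδ]
      have : G w = a1 + a2 * w + a3 / 2 * w ^ 2 := by rw [hG]; simp [le_of_lt hwδ]
      rw [this]
      exact (hP w).congr_of_eventuallyEq hev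
    · subst hwδ
      have hgδ : g w = f w := by simp [hg, e1]
      have hIic : HasDerivWithinAt g d1 (Iic w) w := by
        rw [← e2]
        exact ((hP w).hasDerivWithinAt (s := Iic w)).congr
          (fun x hx => by simp [hg, mem_Iic.mp hx]) (by simp [hg])
      have hIci : HasDerivWithinAt g d1 (Ici w) w := by
        refine (hf1.hasDerivAt.hasDerivWithinAt (s := Ici w)).congr (fun x hx => ?_) hgδ
        rcases lt_or_eq_of_le (mem_Ici.mp hx) with h | h
        · simp [hg, not_le.mpr h]
        · rw [← h]; exact hgδ
      have := hIic.union hIci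
      rw [Iic_union_Ici, hasDerivWithinAt_univ] at this
      have hGδ : G w = d1 := by rw [hG]; simp [e2]
      rwa [hGδ]
    · have hev : g =ᶠ[nhds w] f := by
        filter_upwards [Ioi_mem_nhds hwδ] with x hx
        simp [hg, not_le.mpr (mem_Ioi.mp hx)]
      have : G w = deriv f w := by rw [hG]; simp [not_le.mpr hwδ]
      rw [this]
      exact ((hdiff w hwδ.le hwU).hasDerivAt).congr_of_eventuallyEq hev
  have hconv : Convex ℝ S := by
    rw [convex_iff_ordConnected]
    constructor
    intro x hx y hy z hz
    exact ⟨hx.1.trans hz.1, lt_of_le_of_lt (by exact_mod_cast hz.2) hy.2⟩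
  have hcontg : ContinuousOn g S := fun w hw =>
    ((hgderiv w hw.2).continuousAt).continuousWithinAt
  have hderiveq : ∀ w ∈ S, deriv g w = G w := fun w hw => (hgderiv w hw.2).deriv
  constructor
  · -- forward: concave ⇒ a2 ≤ 0
    rintro ⟨-, hconc⟩
    by_contra hpos
    push_neg at hpos
    set t := min δ (a2 / (|a3| + 1)) with ht
    have habs : (0:ℝ) < |a3| + 1 := by positivity
    have htpos : 0 < t := lt_min hδ (div_pos hpos habs)
    have htδ : t ≤ δ := min_le_left _ _
    have hta : t * (|a3| + 1) ≤ a2 := by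
      rw [← le_div_iff₀ habs]; exact min_le_right _ _
    have h0S : (0:ℝ) ∈ S := ⟨le_rfl, lt_trans (by exact_mod_cast hδ) hδU⟩
    have htS : t ∈ S := ⟨htpos.le, lt_of_le_of_lt (by exact_mod_cast htδ) hδU⟩
    have hkey := hconc.2 h0S htS (by norm_num : (0:ℝ) ≤ 1/2) (by norm_num : (0:ℝ) ≤ 1/2)
      (by norm_num)
    simp only [smul_eq_mul] at hkey
    have hvalue : ∀ x : ℝ, x ≤ δ → g x = a1 * x + a2 / 2 * x ^ 2 + a3 / 6 * x ^ 3 := by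
      intro x hx
      simp only [hg]
      exact if_pos hx
    have hg0 : g 0 = 0 := by rw [hvalue 0 hδ.le]; ring
    have hgt : g t = a1 * t + a2 / 2 * t ^ 2 + a3 / 6 * t ^ 3 := hvalue t htδ
    have hgt2 : g (1/2 * 0 + 1/2 * t) =
        a1 * (t/2) + a2 / 2 * (t/2) ^ 2 + a3 / 6 * (t/2) ^ 3 := by
      have he : (1:ℝ)/2 * 0 + 1/2 * t = t/2 := by ring
      rw [he, hvalue (t/2) (by linarith)]
    rw [hg0, hgt, hgt2] at hkey
    have habs2 : -( |a3| ) ≤ a3 := neg_abs_le a3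
    have h4 : |a3| * t ≤ a2 - t := by
      have : |a3| * t + t ≤ a2 := by
        calc |a3| * t + t = t * (|a3| + 1) := by ring
        _ ≤ a2 := hta
      linarith
    have ht3 : (0:ℝ) < t ^ 3 := by positivity
    have ht2 : (0:ℝ) < t ^ 2 := by positivity
    have h5 : -(|a3| * t ^ 3) ≤ a3 * t ^ 3 := by nlinarith [mul_le_mul_of_nonneg_right habs2 ht3.le]
    have h6 : |a3| * t ^ 3 ≤ (a2 - t) * t ^ 2 := by
      have := mul_le_mul_of_nonneg_right h4 ht2.le
      nlinarith [this]
    have hc2 : 0 < t ^ 2 * a2 := mul_pos ht2 hpos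
    clear_value t a1 a2 a3 d1 d2
    nlinarith [hkey, h5, h6, hc2, ht3]
  · -- reverse: a2 ≤ 0 ⇒ strictly monotone and concave
    intro ha2le
    have hd2' : a2 + a3 * δ ≤ 0 := by rw [e3]; exact hd2le
    -- key quadratic antitone fact on [0, δ]
    have hquad : ∀ x y : ℝ, 0 ≤ x → x ≤ y → y ≤ δ →
        a1 + a2 * y + a3 / 2 * y ^ 2 ≤ a1 + a2 * x + a3 / 2 * x ^ 2 := by
      intro x y hx hxy hyδ
      have H1 := mul_nonneg (mul_nonneg (sub_nonneg.2 hxy)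
          (by linarith : (0:ℝ) ≤ 2 * δ - x - y)) (neg_nonneg.2 ha2le)
      have H2 := mul_nonneg (mul_nonneg (sub_nonneg.2 hxy) (by linarith : (0:ℝ) ≤ x + y))
          (neg_nonneg.2 hd2')
      clear_value a1 a2 a3 d1 d2
      nlinarith [mul_nonneg (mul_nonneg (sub_nonneg.2 hxy)
          (by linarith : (0:ℝ) ≤ 2 * δ - x - y)) (neg_nonneg.2 ha2le),
        mul_nonneg (mul_nonneg (sub_nonneg.2 hxy) (by linarith : (0:ℝ) ≤ x + y))
          (neg_nonneg.2 hd2'), hδ, mul_pos hδ hδ]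
    have hGanti : AntitoneOn G S := by
      intro x hx y hy hxy
      by_cases hyδ : y ≤ δ
      · have hxδ : x ≤ δ := hxy.trans hyδ
        simp only [hG, if_pos hxδ, if_pos hyδ]
        exact hquad x y hx.1 hxy hyδ
      · push_neg at hyδ
        have hGy : G y = deriv f y := by rw [hG]; simp [not_le.mpr hyδ]
        have hGyd1 : G y ≤ d1 := by
          rw [hGy]; exact hanti ⟨le_rfl, hδU⟩ ⟨hyδ.le, hy.2⟩ hyδ.le
        by_cases hxδ : x ≤ δ
        · have hGx : G x = a1 + a2 * x + a3 / 2 * x ^ 2 := by rw [hG]; simp [hxδ]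
          have : d1 ≤ G x := by
            rw [hGx, ← e2]; exact hquad x δ hx.1 hxδ le_rfl
          linarith
        · push_neg at hxδ
          have hGx : G x = deriv f x := by rw [hG]; simp [not_le.mpr hxδ]
          rw [hGx, hGy]
          exact hanti ⟨hxδ.le, hx.2⟩ ⟨(hxδ.trans_le hxy).le, hy.2⟩ hxy
    have hGpos : ∀ w ∈ S, 0 < G w := by
      intro w hw
      by_cases hwδ : w ≤ δ
      · have : G δ ≤ G w := hGanti hw hδS hwδ
        have hGδ : G δ = d1 := by rw [hG]; simp [e2]
        linarith [hGδ ▸ this]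
      · push_neg at hwδ
        have : G w = deriv f w := by rw [hG]; simp [not_le.mpr hwδ]
        rw [this]; exact hfpos w hwδ.le hw.2
    constructor
    · exact strictMonoOn_of_deriv_pos hconv hcontg fun x hx => by
        rw [hderiveq x (interior_subset hx)]
        exact hGpos x (interior_subset hx)
    · refine AntitoneOn.concaveOn_of_deriv hconv hcontg
        (fun x hx => ((hgderiv x (interior_subset hx).2).differentiableAt).differentiableWithinAt)
        ?_
      intro x hx y hy hxy
      rw [hderiveq x (interior_subset hx), hderiveq y (interior_subset hy)]
      exact hGanti (interior_subset hx) (interior_subset hy) hxy
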